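/- Let f be a continuous self-map of a complete metric space (X,d). Then f has a fixed point in X if and only if there exist r ∈ [0,1) and a self-map T : X → X which commutes with f (fT = Tf), satisfies T(X) ⊆ f(X), and satisfies d(Tx,Ty) ≤ r·d(fx,fy) for all x, y ∈ X. Moreover, when such r and T exist, f and T have a unique common fixed point in X. -/
import Mathlib

theorem jungck_aux
    {X : Type*} [MetricSpace X] [CompleteSpace X] [Nonempty X]
    (f : X → X) (hf : Continuous f)
    (r : ℝ) (hr0 : 0 ≤ r) (hr1 : r < 1) (T : X → X)
    (hcomm : ∀ x, f (T x) = T (f x))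
    (hrange : Set.range T ⊆ Set.range f)
    (hcontr : ∀ x y, dist (T x) (T y) ≤ r * dist (f x) (f y)) :
    ∃! z, f z = z ∧ T z = z := by
  -- choose preimages
  choose g hg using fun x => hrange (Set.mem_range_self (f := T) x)
  obtain ⟨x₀⟩ := ‹Nonempty X›
  set xs : ℕ → X := fun n => g^[n] x₀ with hxs
  have hstep : ∀ n, xs (n + 1) = g (xs n) := fun n =>
    Function.iterate_succ_apply' g n x₀
  set u : ℕ → X := fun n => f (xs n) with hu
  have hT : ∀ n, u (n + 1) = T (xs n) := by
    intro n; simp only [hu, hstep, hg]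
  have hgeom : ∀ n, dist (u n) (u (n + 1)) ≤ dist (u 0) (u 1) * r ^ n := by
    intro n
    induction n with
    | zero => simp
    | succ n ih =>
      calc dist (u (n + 1)) (u (n + 2))
          = dist (T (xs n)) (T (xs (n + 1))) := by rw [hT, hT]
        _ ≤ r * dist (f (xs n)) (f (xs (n + 1))) := hcontr _ _
        _ = r * dist (u n) (u (n + 1)) := rfl
        _ ≤ r * (dist (u 0) (u 1) * r ^ n) := by
            exact mul_le_mul_of_nonneg_left ih hr0
        _ = dist (u 0) (u 1) * r ^ (n + 1) := by ring
  have hcauchy : CauchySeq u := cauchySeq_of_le_geometric r _ hr1 hgeom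
  obtain ⟨z, hz⟩ := cauchySeq_tendsto_of_complete hcauchy
  -- u n = f (xs n) → z, and u (n+1) = T (xs n) → z
  have hz1 : Filter.Tendsto (fun n => u (n + 1)) Filter.atTop (nhds z) :=
    hz.comp (Filter.tendsto_add_atTop_nat 1)
  -- f ∘ f ∘ xs → f z
  have hffz : Filter.Tendsto (fun n => f (f (xs n))) Filter.atTop (nhds (f z)) :=
    (hf.tendsto z).comp hz
  -- T (f (xs n)) → T z via contraction
  have hTfz : Filter.Tendsto (fun n => T (f (xs n))) Filter.atTop (nhds (T z)) := by
    rw [tendsto_iff_dist_tendsto_zero]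
    have hb : ∀ n, dist (T (f (xs n))) (T z) ≤ r * dist (f (f (xs n))) (f z) :=
      fun n => hcontr _ _
    have h0 : Filter.Tendsto (fun n => r * dist (f (f (xs n))) (f z))
        Filter.atTop (nhds 0) := by
      have := (tendsto_iff_dist_tendsto_zero.mp hffz).const_mul r
      simpa using this
    exact squeeze_zero (fun n => dist_nonneg) hb h0
  -- T (f (xs n)) = f (T (xs n)) = f (u (n+1)) → f z
  have hTfz' : Filter.Tendsto (fun n => T (f (xs n))) Filter.atTop (nhds (f z)) := by
    have : (fun n => T (f (xs n))) = fun n => f (u (n + 1)) := by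
      funext n; rw [← hcomm, hT]
    rw [this]
    exact (hf.tendsto z).comp hz1
  have key : T z = f z := tendsto_nhds_unique hTfz hTfz'
  -- w := f z is the common fixed point
  set w := f z with hw
  have hTw : T w = f w := by
    rw [hw, ← hcomm, key]
  have hTzw : T w = T z := by
    have h' : dist (T w) (T z) ≤ r * dist (T w) (T z) := by
      calc dist (T w) (T z) ≤ r * dist (f w) (f z) := hcontr w z
        _ = r * dist (T w) (T z) := by rw [hTw, key]
    have hd : dist (T w) (T z) ≤ 0 := by nlinarith [dist_nonneg (x := T w) (y := T z)]
    exact dist_eq_zero.mp (le_antisymm hd dist_nonneg)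
  have hfixT : T w = w := by rw [hTzw, key]
  have hfixf : f w = w := by rw [← hTw, hfixT]
  refine ⟨w, ⟨hfixf, hfixT⟩, ?_⟩
  rintro y ⟨hfy, hTy⟩
  have h := hcontr y w
  rw [hTy, hfixT, hfy, hfixf] at h
  have := dist_nonneg (x := y) (y := w)
  have hd : dist y w ≤ 0 := by nlinarith
  exact dist_eq_zero.mp (le_antisymm hd dist_nonneg)

theorem jungck_fixed_point
    {X : Type*} [MetricSpace X] [CompleteSpace X] [Nonempty X]
    (f : X → X) (hf : Continuous f) :
    ((∃ x, f x = x) ↔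
      ∃ r : ℝ, 0 ≤ r ∧ r < 1 ∧ ∃ T : X → X,
        (∀ x, f (T x) = T (f x)) ∧
        Set.range T ⊆ Set.range f ∧
        (∀ x y, dist (T x) (T y) ≤ r * dist (f x) (f y))) ∧
    (∀ r : ℝ, 0 ≤ r → r < 1 → ∀ T : X → X,
      (∀ x, f (T x) = T (f x)) →
      Set.range T ⊆ Set.range f →
      (∀ x y, dist (T x) (T y) ≤ r * dist (f x) (f y)) →
      ∃! z, f z = z ∧ T z = z) := by
  constructor
  · constructor
    · rintro ⟨x₀, hx₀⟩
      refine ⟨0, le_refl 0, one_pos, fun _ => x₀, ?_, ?_, ?_⟩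
      · intro x; simp [hx₀]
      · rintro y ⟨x, rfl⟩; exact ⟨x₀, hx₀⟩
      · intro x y; simp
    · rintro ⟨r, hr0, hr1, T, hcomm, hrange, hcontr⟩
      obtain ⟨z, ⟨hfz, _⟩, _⟩ :=
        jungck_aux f hf r hr0 hr1 T hcomm hrange hcontr
      exact ⟨z, hfz⟩
  · intro r hr0 hr1 T hcomm hrange hcontr
    exact jungck_aux f hf r hr0 hr1 T hcomm hrange hcontr
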